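/- Let J₁, J₂ ⊆ I be ideals in a commutative Noetherian ring R, both Aluffi torsion-free in I, and suppose the image of J₁ modulo J₂ is Aluffi torsion-free with respect to the image of I in R/J₂. Then (J₁ + J₂) ∩ Iⁿ ⊆ (J₁ ∩ Iⁿ) + (J₂ ∩ Iⁿ) for all n ≥ 1. -/

import Mathlib

/-- Key containment in the sum criterion: `(J₁ + J₂) ∩ Iⁿ ⊆ (J₁ ∩ Iⁿ) + (J₂ ∩ Iⁿ)`. -/
theorem sum_inter_pow_le {R : Type*} [CommRing R] [IsNoetherianRing R]
    (J₁ J₂ I : Ideal R) (h₁I : J₁ ≤ I) (h₂I : J₂ ≤ I)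
    (h₁ : ∀ n : ℕ, 1 ≤ n → J₁ ⊓ I ^ n = J₁ * I ^ (n - 1))
    (h₂ : ∀ n : ℕ, 1 ≤ n → J₂ ⊓ I ^ n = J₂ * I ^ (n - 1))
    (hq : ∀ n : ℕ, 1 ≤ n →
      (J₁.map (Ideal.Quotient.mk J₂)) ⊓ (I.map (Ideal.Quotient.mk J₂)) ^ n =
        (J₁.map (Ideal.Quotient.mk J₂)) * (I.map (Ideal.Quotient.mk J₂)) ^ (n - 1)) :
    ∀ n : ℕ, 1 ≤ n → (J₁ + J₂) ⊓ I ^ n ≤ (J₁ ⊓ I ^ n) + (J₂ ⊓ I ^ n) := by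
  intro n hn x hx
  obtain ⟨hx1, hxI⟩ := hx
  have hmk : Ideal.Quotient.mk J₂ x ∈
      (J₁.map (Ideal.Quotient.mk J₂)) ⊓ (I.map (Ideal.Quotient.mk J₂)) ^ n := by
    constructor
    · exact Ideal.mem_quotient_iff_mem_sup.mpr hx1
    · rw [← Ideal.map_pow]
      exact Ideal.mem_quotient_iff_mem_sup.mpr (Ideal.mem_sup_left hxI)
  rw [hq n hn, ← Ideal.map_pow, ← Ideal.map_mul, Ideal.mem_quotient_iff_mem_sup] at hmk
  obtain ⟨u, hu, v, hv, huv⟩ := Submodule.mem_sup.mp hmk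
  have huJ : u ∈ J₁ * I ^ (n - 1) := hu
  have huI : u ∈ I ^ n := by
    have hle : J₁ * I ^ (n - 1) ≤ I ^ n := by
      calc J₁ * I ^ (n - 1) ≤ I * I ^ (n - 1) := Ideal.mul_mono_left h₁I
        _ = I ^ n := by
            conv_rhs => rw [show n = (n - 1) + 1 from (Nat.succ_pred_eq_of_pos hn).symm]
            rw [pow_succ, mul_comm]
    exact hle huJ
  refine Submodule.mem_sup.mpr ⟨u, Ideal.mem_inf.mpr ⟨Ideal.mul_le_left huJ, huI⟩, v, Ideal.mem_inf.mpr ⟨hv, ?_⟩, huv⟩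
  have hv' : v = x - u := by rw [← huv]; ring
  rw [hv']; exact Submodule.sub_mem _ hxI huI
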